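/- arXiv:2504.20390 — 2 statements merged into one kernel-verified Lean document; each statement's English description precedes it below -/
import Mathlib

section
/- Let X = [x_1,...,x_N] with x_i ∈ ℝ^d, G an N×K binary indicator matrix with cluster sizes p_j = Σ_i g_{ij} > 0, and let u_j = (1/p_j) Σ_i g_{ij} x_i be the centroid of cluster j. Define A = G P^{-1/2} where P = diag(p_1,...,p_K), and M = A Aᵀ. Then Σ_{i,j} g_{ij} ‖x_i − u_j‖² = (1/2) Σ_{i,l} ‖x_i − x_l‖² m_{il}. -/
open Matrix Finset

/-- Theorem 1 of the paper, with the correct factor 1/2: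
for data points `x i ∈ ℝ^d`, a binary indicator matrix `G` with positive cluster
sizes `p j`, centroids `u j = (1 / p j) • ∑ i, g i j • x i`, `A = G P^{-1/2}` and
`M = A Aᵀ`, the K-means objective satisfies
`∑ i j, g i j * ‖x i - u j‖² = (1/2) * ∑ i l, ‖x i - x l‖² * m i l`. -/
theorem kmeans_eq_manifold {N K d : ℕ}
    (x : Fin N → EuclideanSpace ℝ (Fin d))
    (G : Matrix (Fin N) (Fin K) ℝ)
    (hbin : ∀ i j, G i j = 0 ∨ G i j = 1)
    (hrow : ∀ i, ∑ j, G i j = 1)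
    (p : Fin K → ℝ) (hp : ∀ j, p j = ∑ i, G i j) (hpos : ∀ j, 0 < p j)
    (u : Fin K → EuclideanSpace ℝ (Fin d))
    (hu : ∀ j, u j = (p j)⁻¹ • ∑ i, G i j • x i)
    (A : Matrix (Fin N) (Fin K) ℝ)
    (hA : A = G * Matrix.diagonal fun j => (Real.sqrt (p j))⁻¹)
    (M : Matrix (Fin N) (Fin N) ℝ) (hM : M = A * Aᵀ) :
    ∑ i, ∑ j, G i j * ‖x i - u j‖ ^ 2 =
      (1 / 2) * ∑ i, ∑ l, ‖x i - x l‖ ^ 2 * M i l := by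
  have hpne : ∀ j, p j ≠ 0 := fun j => (hpos j).ne'
  -- entries of M
  have hAel : ∀ i j, A i j = G i j * (Real.sqrt (p j))⁻¹ := by
    intro i j
    rw [hA, Matrix.mul_diagonal]
  have hMel : ∀ i l, M i l = ∑ j, G i j * G l j * (p j)⁻¹ := by
    intro i l
    rw [hM, Matrix.mul_apply]
    simp only [Matrix.transpose_apply, hAel]
    refine Finset.sum_congr rfl fun j _ => ?_
    have h : (Real.sqrt (p j))⁻¹ * (Real.sqrt (p j))⁻¹ = (p j)⁻¹ := by
      rw [← mul_inv, Real.mul_self_sqrt (hpos j).le]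
    calc G i j * (Real.sqrt (p j))⁻¹ * (G l j * (Real.sqrt (p j))⁻¹)
        = G i j * G l j * ((Real.sqrt (p j))⁻¹ * (Real.sqrt (p j))⁻¹) := by ring
      _ = G i j * G l j * (p j)⁻¹ := by rw [h]
  set B : Fin K → ℝ := fun j => ∑ i, G i j * ‖x i‖ ^ 2 with hB
  set T : Fin K → Fin N → ℝ := fun j i => ∑ l, G l j * (inner ℝ (x i) (x l) : ℝ) with hT
  set S : Fin K → ℝ := fun j => ∑ i, G i j * T j i with hS
  have hcol : ∀ j, ∑ i, G i j = p j := fun j => (hp j).symm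
  -- inner product of a point with the sum
  have hTi : ∀ j i, (inner ℝ (x i) (∑ l, G l j • x l) : ℝ) = T j i := by
    intro j i
    rw [inner_sum]
    exact Finset.sum_congr rfl fun l _ => real_inner_smul_right _ _ _
  -- inner product of the sum with itself
  have hss : ∀ j, (inner ℝ (∑ i, G i j • x i) (∑ l, G l j • x l) : ℝ) = S j := by
    intro j
    rw [sum_inner]
    refine Finset.sum_congr rfl fun i _ => ?_
    rw [real_inner_smul_left, hTi]
  -- inner product with centroid
  have hiu : ∀ j i, (inner ℝ (x i) (u j) : ℝ) = (p j)⁻¹ * T j i := by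
    intro j i
    rw [hu, real_inner_smul_right, hTi]
  -- norm of centroid
  have hnu : ∀ j, ‖u j‖ ^ 2 = (p j)⁻¹ * ((p j)⁻¹ * S j) := by
    intro j
    rw [← real_inner_self_eq_norm_sq, hu, real_inner_smul_left, real_inner_smul_right, hss]
  -- LHS per cluster
  have hL : ∀ j, ∑ i, G i j * ‖x i - u j‖ ^ 2 = B j - (p j)⁻¹ * S j := by
    intro j
    have step : ∀ i, G i j * ‖x i - u j‖ ^ 2
        = G i j * ‖x i‖ ^ 2 - (2 * (p j)⁻¹) * (G i j * T j i)
          + G i j * ((p j)⁻¹ * ((p j)⁻¹ * S j)) := by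
      intro i
      rw [norm_sub_sq_real, hiu, hnu]
      ring
    rw [Finset.sum_congr rfl fun i _ => step i]
    rw [Finset.sum_add_distrib, Finset.sum_sub_distrib, ← Finset.mul_sum, ← Finset.sum_mul,
      hcol]
    rw [show ∑ i, G i j * ‖x i‖ ^ 2 = B j from rfl, show ∑ i, G i j * T j i = S j from rfl]
    rw [show p j * ((p j)⁻¹ * ((p j)⁻¹ * S j)) = (p j)⁻¹ * S j by
      rw [← mul_assoc, mul_inv_cancel₀ (hpne j), one_mul]]
    ring
  -- RHS per cluster
  have hR : ∀ j, ∑ i, ∑ l, ‖x i - x l‖ ^ 2 * (G i j * G l j * (p j)⁻¹)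
      = 2 * (B j - (p j)⁻¹ * S j) := by
    intro j
    have step : ∀ i l, ‖x i - x l‖ ^ 2 * (G i j * G l j * (p j)⁻¹)
        = (p j)⁻¹ * ((‖x i‖ ^ 2 * G i j) * G l j)
          - (2 * (p j)⁻¹) * (G i j * (G l j * (inner ℝ (x i) (x l) : ℝ)))
          + (p j)⁻¹ * (G i j * (G l j * ‖x l‖ ^ 2)) := by
      intro i l
      rw [norm_sub_sq_real]
      ring
    rw [Finset.sum_congr rfl fun i _ => Finset.sum_congr rfl fun l _ => step i l]
    have e1 : ∑ i, ∑ l, ((p j)⁻¹ * ((‖x i‖ ^ 2 * G i j) * G l j)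
          - (2 * (p j)⁻¹) * (G i j * (G l j * (inner ℝ (x i) (x l) : ℝ)))
          + (p j)⁻¹ * (G i j * (G l j * ‖x l‖ ^ 2)))
        = (∑ i, ∑ l, (p j)⁻¹ * ((‖x i‖ ^ 2 * G i j) * G l j))
          - (∑ i, ∑ l, (2 * (p j)⁻¹) * (G i j * (G l j * (inner ℝ (x i) (x l) : ℝ))))
          + (∑ i, ∑ l, (p j)⁻¹ * (G i j * (G l j * ‖x l‖ ^ 2))) := by
      simp [Finset.sum_add_distrib, Finset.sum_sub_distrib]
    rw [e1]
    have hbp : B j * p j = ∑ i, ∑ l, (G i j * ‖x i‖ ^ 2) * G l j := by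
      rw [show B j = ∑ i, G i j * ‖x i‖ ^ 2 from rfl, hp j, Finset.sum_mul_sum]
    have t1 : ∑ i, ∑ l, (p j)⁻¹ * ((‖x i‖ ^ 2 * G i j) * G l j) = (p j)⁻¹ * (B j * p j) := by
      rw [hbp, Finset.mul_sum]
      refine Finset.sum_congr rfl fun i _ => ?_
      rw [Finset.mul_sum]
      exact Finset.sum_congr rfl fun l _ => by ring
    have hSj : S j = ∑ i, ∑ l, G i j * (G l j * (inner ℝ (x i) (x l) : ℝ)) :=
      Finset.sum_congr rfl fun i _ => Finset.mul_sum ..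
    have t2 : ∑ i, ∑ l, (2 * (p j)⁻¹) * (G i j * (G l j * (inner ℝ (x i) (x l) : ℝ)))
        = (2 * (p j)⁻¹) * S j := by
      rw [hSj, Finset.mul_sum]
      refine Finset.sum_congr rfl fun i _ => ?_
      rw [Finset.mul_sum]
    have hpb : p j * B j = ∑ i, ∑ l, G i j * (G l j * ‖x l‖ ^ 2) := by
      rw [show B j = ∑ l, G l j * ‖x l‖ ^ 2 from rfl, hp j, Finset.sum_mul_sum]
    have t3 : ∑ i, ∑ l, (p j)⁻¹ * (G i j * (G l j * ‖x l‖ ^ 2)) = (p j)⁻¹ * (p j * B j) := by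
      rw [hpb, Finset.mul_sum]
      exact Finset.sum_congr rfl fun i _ => (Finset.mul_sum ..).symm
    rw [t1, t2, t3,
      show (p j)⁻¹ * (B j * p j) = B j by
        rw [mul_comm (B j), ← mul_assoc, inv_mul_cancel₀ (hpne j), one_mul],
      show (p j)⁻¹ * (p j * B j) = B j by
        rw [← mul_assoc, inv_mul_cancel₀ (hpne j), one_mul]]
    ring
  -- assemble
  calc ∑ i, ∑ j, G i j * ‖x i - u j‖ ^ 2
      = ∑ j, (B j - (p j)⁻¹ * S j) := by
        rw [Finset.sum_comm]; exact Finset.sum_congr rfl fun j _ => hL j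
    _ = (1 / 2) * ∑ j, 2 * (B j - (p j)⁻¹ * S j) := by
        rw [← Finset.mul_sum]; ring
    _ = (1 / 2) * ∑ i, ∑ l, ‖x i - x l‖ ^ 2 * M i l := by
        congr 1
        calc ∑ j, 2 * (B j - (p j)⁻¹ * S j)
            = ∑ j, ∑ i, ∑ l, ‖x i - x l‖ ^ 2 * (G i j * G l j * (p j)⁻¹) :=
              Finset.sum_congr rfl fun j _ => (hR j).symm
          _ = ∑ i, ∑ j, ∑ l, ‖x i - x l‖ ^ 2 * (G i j * G l j * (p j)⁻¹) := Finset.sum_comm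
          _ = ∑ i, ∑ l, ∑ j, ‖x i - x l‖ ^ 2 * (G i j * G l j * (p j)⁻¹) :=
              Finset.sum_congr rfl fun i _ => Finset.sum_comm
          _ = ∑ i, ∑ l, ‖x i - x l‖ ^ 2 * M i l := by
              refine Finset.sum_congr rfl fun i _ => Finset.sum_congr rfl fun l _ => ?_
              rw [hMel, Finset.mul_sum]
end

section
/- For a square matrix G with SVD G = UΣVᵀ where all singular values are positive, the gradient of ‖G‖_{Sp}^p with respect to G is p·U Σ^{p−1} Vᵀ, i.e., the directional derivative of G ↦ tr((GᵀG)^{p/2}) at G in direction H equals p·tr(V Σ^{p−1} Uᵀ H). -/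
open Matrix

/-- The `p`-th power of the Schatten p-norm of a real square matrix:
the sum of the `(p/2)`-th powers of the eigenvalues of `MᵀM` (over `ℝ`,
`Mᴴ = Mᵀ`), i.e. `tr((MᵀM)^{p/2}) = ∑ i, σ i ^ p`. -/
noncomputable def schattenPowSq {n : ℕ} (p : ℝ) (M : Matrix (Fin n) (Fin n) ℝ) : ℝ :=
  ∑ i, ((Matrix.isHermitian_conjTranspose_mul_self M).eigenvalues i) ^ (p / 2)

open Polynomial Filter Set Topology

attribute [local instance] Matrix.linftyOpNormedRing Matrix.linftyOpNormedAlgebra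

namespace SchattenAux

variable {n : ℕ}



lemma conj_pow (W : Matrix (Fin n) (Fin n) ℝ) (hW : Wᵀ * W = 1) (d : Fin n → ℝ) (k : ℕ) :
    (W * diagonal d * Wᵀ) ^ k = W * diagonal (fun i => d i ^ k) * Wᵀ := by
  have hW' : W * Wᵀ = 1 := mul_eq_one_comm.mp hW
  induction k with
  | zero => simp [hW']
  | succ k ih =>
    rw [pow_succ, ih]
    calc W * diagonal (fun i => d i ^ k) * Wᵀ * (W * diagonal d * Wᵀ)
        = W * diagonal (fun i => d i ^ k) * (Wᵀ * W) * (diagonal d * Wᵀ) := by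
          noncomm_ring
      _ = W * (diagonal (fun i => d i ^ k) * diagonal d) * Wᵀ := by
          rw [hW]; noncomm_ring
      _ = W * diagonal (fun i => d i ^ (k + 1)) * Wᵀ := by
          rw [diagonal_mul_diagonal]
          have : (fun i => d i ^ k * d i) = fun i => d i ^ (k + 1) := by
            funext i; rw [pow_succ]
          rw [this]

lemma aeval_conj_orth (W : Matrix (Fin n) (Fin n) ℝ) (hW : Wᵀ * W = 1) (d : Fin n → ℝ) (q : ℝ[X]) :
    aeval (W * diagonal d * Wᵀ) q = W * diagonal (fun i => q.eval (d i)) * Wᵀ := by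
  induction q using Polynomial.induction_on' with
  | add q1 q2 h1 h2 =>
    rw [map_add, h1, h2]
    have : (fun i => (q1 + q2).eval (d i))
        = fun i => q1.eval (d i) + q2.eval (d i) := by
      funext i; simp
    rw [this, ← diagonal_add, Matrix.mul_add, Matrix.add_mul]
  | monomial k a =>
    rw [aeval_monomial, conj_pow W hW, Algebra.algebraMap_eq_smul_one]
    have : (fun i => (monomial k a).eval (d i))
        = a • fun i => d i ^ k := by
      funext i; simp [eval_monomial]
    rw [this, diagonal_smul, smul_one_mul, Matrix.mul_smul, Matrix.smul_mul]

lemma trace_diagonal_mul (d : Fin n → ℝ) (M : Matrix (Fin n) (Fin n) ℝ) :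
    trace (diagonal d * M) = ∑ i, d i * M i i := by
  simp [Matrix.trace, Matrix.diag, Matrix.mul_apply, Matrix.diagonal_apply]

lemma trace_conj_diag (W : Matrix (Fin n) (Fin n) ℝ) (hW : Wᵀ * W = 1) (d : Fin n → ℝ) :
    trace (W * diagonal d * Wᵀ) = ∑ i, d i := by
  rw [Matrix.trace_mul_cycle, hW, Matrix.one_mul, trace_diagonal]

lemma trace_conj_diag_mul (W : Matrix (Fin n) (Fin n) ℝ) (d : Fin n → ℝ)
    (B : Matrix (Fin n) (Fin n) ℝ) :
    trace (W * diagonal d * Wᵀ * B) = ∑ i, d i * (Wᵀ * B * W) i i := by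
  have h1 : W * diagonal d * Wᵀ * B = W * (diagonal d * (Wᵀ * B)) := by noncomm_ring
  rw [h1, Matrix.trace_mul_comm]
  have h2 : diagonal d * (Wᵀ * B) * W = diagonal d * (Wᵀ * B * W) := by noncomm_ring
  rw [h2, trace_diagonal_mul]

/-- real version of the spectral theorem -/
lemma real_spectral (A : Matrix (Fin n) (Fin n) ℝ) (hA : A.IsHermitian) :
    ∃ W : Matrix (Fin n) (Fin n) ℝ, Wᵀ * W = 1 ∧
      A = W * diagonal hA.eigenvalues * Wᵀ := by
  refine ⟨(hA.eigenvectorUnitary : Matrix (Fin n) (Fin n) ℝ), ?_, ?_⟩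
  · have h := Unitary.coe_star_mul_self hA.eigenvectorUnitary
    have hstar : (star (hA.eigenvectorUnitary : Matrix (Fin n) (Fin n) ℝ))
        = (hA.eigenvectorUnitary : Matrix (Fin n) (Fin n) ℝ)ᵀ := by
      ext i j; simp [Matrix.star_apply]
    rw [← hstar]; exact h
  · have h := hA.spectral_theorem
    have hstar : (star (hA.eigenvectorUnitary : Matrix (Fin n) (Fin n) ℝ))
        = (hA.eigenvectorUnitary : Matrix (Fin n) (Fin n) ℝ)ᵀ := by
      ext i j; simp [Matrix.star_apply]
    rw [Unitary.conjStarAlgAut_apply, hstar] at h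
    have hco : (RCLike.ofReal ∘ hA.eigenvalues : Fin n → ℝ) = hA.eigenvalues := by
      funext i; simp
    rw [hco] at h
    exact h




noncomputable def traceCLM : Matrix (Fin n) (Fin n) ℝ →L[ℝ] ℝ :=
  LinearMap.toContinuousLinearMap (Matrix.traceLinearMap (Fin n) ℝ ℝ)

lemma hasDerivAt_matrix_pow {A : ℝ → Matrix (Fin n) (Fin n) ℝ}
    {B : Matrix (Fin n) (Fin n) ℝ} {t : ℝ}
    (hA : HasDerivAt A B t) (k : ℕ) :
    HasDerivAt (fun s => A s ^ k)
      (∑ j ∈ Finset.range k, A t ^ j * B * A t ^ (k - 1 - j)) t := by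
  induction k with
  | zero =>
    simp only [pow_zero, Finset.sum_range_zero]
    exact hasDerivAt_const t (1 : Matrix (Fin n) (Fin n) ℝ)
  | succ k ih =>
    have h := hA.mul ih
    have heq : (A * fun s => A s ^ k) = fun s => A s ^ (k + 1) := by
      funext s; rw [Pi.mul_apply, pow_succ']
    rw [heq] at h
    refine h.congr_deriv (Eq.symm ?_)
    rw [Finset.sum_range_succ']
    have e1 : ∀ j ∈ Finset.range k,
        A t ^ (j + 1) * B * A t ^ (k + 1 - 1 - (j + 1))
          = A t * (A t ^ j * B * A t ^ (k - 1 - j)) := by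
      intro j hj
      have h2 : k + 1 - 1 - (j + 1) = k - 1 - j := by omega
      rw [h2, pow_succ']
      noncomm_ring
    rw [Finset.sum_congr rfl e1, ← Finset.mul_sum]
    have h3 : k + 1 - 1 - 0 = k := by omega
    rw [h3, pow_zero, Matrix.one_mul]
    abel

lemma hasDerivAt_trace_aeval {A : ℝ → Matrix (Fin n) (Fin n) ℝ}
    {B : Matrix (Fin n) (Fin n) ℝ} {t : ℝ} (hA : HasDerivAt A B t) (q : ℝ[X]) :
    HasDerivAt (fun s => trace (aeval (A s) q))
      (trace (aeval (A t) (derivative q) * B)) t := by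
  induction q using Polynomial.induction_on' with
  | add q1 q2 h1 h2 =>
    have heq : (fun s => trace (aeval (A s) (q1 + q2)))
        = fun s => trace (aeval (A s) q1) + trace (aeval (A s) q2) := by
      funext s; rw [map_add, trace_add]
    rw [heq, derivative_add, map_add, Matrix.add_mul, trace_add]
    exact h1.add h2
  | monomial k a =>
    have heq : (fun s => trace (aeval (A s) (monomial k a)))
        = fun s => a * trace (A s ^ k) := by
      funext s
      rw [aeval_monomial, Algebra.algebraMap_eq_smul_one, smul_one_mul, trace_smul,
        smul_eq_mul]
    have hpow := hasDerivAt_matrix_pow hA k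
    have htr : HasDerivAt (fun s => trace (A s ^ k))
        (trace (∑ j ∈ Finset.range k, A t ^ j * B * A t ^ (k - 1 - j))) t := by
      have := (traceCLM (n := n)).hasFDerivAt.comp_hasDerivAt t hpow
      exact this
    have htrsum : trace (∑ j ∈ Finset.range k, A t ^ j * B * A t ^ (k - 1 - j))
        = (k : ℝ) * trace (A t ^ (k - 1) * B) := by
      rw [trace_sum]
      rw [Finset.sum_congr rfl (fun j hj => ?_), Finset.sum_const, Finset.card_range,
        nsmul_eq_mul]
      have hjk := Finset.mem_range.mp hj
      have h4 : k - 1 - j + j = k - 1 := by omega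
      rw [Matrix.trace_mul_cycle, ← pow_add, h4]
    rw [heq]
    have final := htr.const_mul a
    refine final.congr_deriv (Eq.symm ?_)
    rw [derivative_monomial, aeval_monomial, Algebra.algebraMap_eq_smul_one, smul_one_mul,
      Matrix.smul_mul, trace_smul, smul_eq_mul, htrsum]
    push_cast
    ring


noncomputable def pInt (q : ℝ[X]) : ℝ[X] := q.sum fun k c => C (c / (k + 1)) * X ^ (k + 1)

lemma derivative_pInt (q : ℝ[X]) : derivative (pInt q) = q := by
  conv_rhs => rw [← Polynomial.sum_C_mul_X_pow_eq q]
  unfold pInt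
  rw [Polynomial.sum, Polynomial.sum, map_sum]
  refine Finset.sum_congr rfl fun k _ => ?_
  rw [derivative_C_mul_X_pow, Nat.add_sub_cancel]
  congr 1
  push_cast
  field_simp

lemma eig_bounds {n : ℕ} {μ : Fin n → ℝ} {K c : ℝ} (h0 : ∀ i, 0 ≤ μ i)
    (htr : ∑ i, μ i ≤ K) (hdet : c ≤ ∏ i, μ i) (hc : 0 < c) (hK : 0 < K) (i : Fin n) :
    c / K ^ (n - 1) ≤ μ i ∧ μ i ≤ K := by
  have hub : ∀ j, μ j ≤ K := fun j =>
    le_trans (Finset.single_le_sum (fun k _ => h0 k) (Finset.mem_univ j)) htr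
  have hcard : (Finset.univ.erase i).card = n - 1 := by
    rw [Finset.card_erase_of_mem (Finset.mem_univ i), Finset.card_univ, Fintype.card_fin]
  have hprod : ∏ j ∈ Finset.univ.erase i, μ j ≤ K ^ (n - 1) := by
    calc ∏ j ∈ Finset.univ.erase i, μ j ≤ ∏ _j ∈ Finset.univ.erase i, K :=
          Finset.prod_le_prod (fun j _ => h0 j) (fun j _ => hub j)
      _ = K ^ (n - 1) := by rw [Finset.prod_const, hcard]
  have h2 : ∏ j, μ j = μ i * ∏ j ∈ Finset.univ.erase i, μ j :=
    (Finset.mul_prod_erase _ _ (Finset.mem_univ i)).symm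
  have h3 : μ i * ∏ j ∈ Finset.univ.erase i, μ j ≤ μ i * K ^ (n - 1) :=
    mul_le_mul_of_nonneg_left hprod (h0 i)
  have key : c ≤ μ i * K ^ (n - 1) := by
    rw [h2] at hdet; linarith
  exact ⟨(div_le_iff₀ (pow_pos hK _)).mpr key, hub i⟩

end SchattenAux

open SchattenAux

set_option maxHeartbeats 1600000

/-- For an invertible square `G` with SVD `G = U Σ Vᵀ` (all singular
values positive) and `p > 1`, the directional derivative of `M ↦ tr((MᵀM)^{p/2})`
at `G` in direction `H` equals `p * tr(V Σ^{p-1} Uᵀ H)`; i.e. the gradient of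
`‖G‖_{Sp}^p` is `p U Σ^{p-1} Vᵀ`. -/
theorem schatten_pow_gradient {n : ℕ}
    (G U V : Matrix (Fin n) (Fin n) ℝ) (σ : Fin n → ℝ) (hσ : ∀ i, 0 < σ i)
    (hU : Uᵀ * U = 1) (hV : Vᵀ * V = 1)
    (hSVD : G = U * Matrix.diagonal σ * Vᵀ)
    (hG : IsUnit G)
    (p : ℝ) (hp : 1 < p) :
    ∀ H : Matrix (Fin n) (Fin n) ℝ,
      HasDerivAt (fun t : ℝ => schattenPowSq p (G + t • H))
        (p * Matrix.trace (V * Matrix.diagonal (fun i => σ i ^ (p - 1)) * Uᵀ * H))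
        0 := by
  intro H
  classical
  rcases Nat.eq_zero_or_pos n with hn | hn1
  · subst hn
    have h0 : (fun t : ℝ => schattenPowSq p (G + t • H)) = fun _ => 0 := by
      funext t; simp [schattenPowSq]
    have h1 : Matrix.trace (V * Matrix.diagonal (fun i => σ i ^ (p - 1)) * Uᵀ * H) = 0 := by
      simp [Matrix.trace]
    rw [h0, h1, mul_zero]
    exact hasDerivAt_const 0 0
  -- basic matrices
  set C1 : Matrix (Fin n) (Fin n) ℝ := Gᵀ * H + Hᵀ * G with hC1
  set C2 : Matrix (Fin n) (Fin n) ℝ := Hᵀ * H with hC2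
  have hAexp : ∀ t : ℝ, (G + t • H)ᵀ * (G + t • H) = Gᵀ * G + t • C1 + (t ^ 2) • C2 := by
    intro t
    rw [hC1, hC2, transpose_add, transpose_smul, Matrix.add_mul, Matrix.mul_add,
      Matrix.mul_add, Matrix.smul_mul, Matrix.smul_mul, Matrix.mul_smul, Matrix.mul_smul,
      smul_add, smul_smul, sq]
    abel
  set Amap : ℝ → Matrix (Fin n) (Fin n) ℝ := fun t => (G + t • H)ᵀ * (G + t • H) with hAmap
  set Bmap : ℝ → Matrix (Fin n) (Fin n) ℝ := fun t => C1 + (2 * t) • C2 with hBmap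
  have hHerm : ∀ t, (Amap t).IsHermitian := fun t => isHermitian_conjTranspose_mul_self (G + t • H)
  set lam : ℝ → Fin n → ℝ := fun t => (hHerm t).eigenvalues with hlam
  have f_eq : ∀ t : ℝ, schattenPowSq p (G + t • H) = ∑ i, lam t i ^ (p / 2) := by
    intro t; rfl
  have hPSD : ∀ t i, 0 ≤ lam t i := by
    intro t i
    have h1 : ((G + t • H)ᴴ * (G + t • H)).PosSemidef := posSemidef_conjTranspose_mul_self _
    have h2 : (G + t • H)ᴴ = (G + t • H)ᵀ := by
      ext i j; simp [conjTranspose_apply]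
    rw [h2] at h1
    exact h1.eigenvalues_nonneg i
  have hspec : ∀ t, ∃ Wt : Matrix (Fin n) (Fin n) ℝ, Wtᵀ * Wt = 1 ∧
      Amap t = Wt * diagonal (lam t) * Wtᵀ := fun t => real_spectral _ (hHerm t)
  choose W hW1 hW2 using hspec
  have htrace : ∀ t, trace (Amap t) = ∑ i, lam t i := by
    intro t
    conv_lhs => rw [hW2 t]
    rw [trace_conj_diag _ (hW1 t)]
  have hdetW : ∀ t, det (W t) * det (W t) = 1 := by
    intro t
    have := congrArg det (hW1 t)
    rwa [det_mul, det_transpose, det_one] at this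
  have hdetA : ∀ t, det (Amap t) = ∏ i, lam t i := by
    intro t
    rw [hW2 t, det_mul, det_mul, det_diagonal, det_transpose, mul_right_comm,
      hdetW t, one_mul]
  -- constants
  have hdetG : det G ≠ 0 := ((Matrix.isUnit_iff_isUnit_det G).mp hG).ne_zero
  set d0 : ℝ := det (Gᵀ * G) with hd0def
  have hd0 : 0 < d0 := by
    rw [hd0def, det_mul, det_transpose]
    exact mul_self_pos.mpr hdetG
  set K : ℝ := (∑ i, ∑ j, (|G i j| + |H i j|) ^ 2) + 1 with hKdef
  have hKsum : (0:ℝ) ≤ ∑ i, ∑ j, (|G i j| + |H i j|) ^ 2 := by positivity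
  have hK1 : 1 ≤ K := by rw [hKdef]; linarith
  have hK0 : 0 < K := lt_of_lt_of_le one_pos hK1
  have htraceK : ∀ t : ℝ, |t| ≤ 1 → trace (Amap t) ≤ K := by
    intro t ht
    have hent : ∀ i j : Fin n, (G + t • H) j i * (G + t • H) j i
        ≤ (|G j i| + |H j i|) ^ 2 := by
      intro i j
      have habs : |(G + t • H) j i| ≤ |G j i| + |H j i| := by
        have he : (G + t • H) j i = G j i + t * H j i := by
          simp [Matrix.add_apply, Matrix.smul_apply, smul_eq_mul]
        rw [he]
        calc |G j i + t * H j i| ≤ |G j i| + |t * H j i| := abs_add_le _ _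
          _ ≤ |G j i| + |H j i| := by
              rw [abs_mul]
              have := abs_nonneg (H j i)
              nlinarith
      calc (G + t • H) j i * (G + t • H) j i = |(G + t • H) j i| * |(G + t • H) j i| :=
            (abs_mul_abs_self _).symm
        _ ≤ (|G j i| + |H j i|) ^ 2 := by
            rw [sq]
            have h0 : (0:ℝ) ≤ |(G + t • H) j i| := abs_nonneg _
            exact mul_le_mul habs habs h0 (by positivity)
    have htr : trace (Amap t) = ∑ i, ∑ j, (G + t • H) j i * (G + t • H) j i := by
      rw [hAmap]
      simp [Matrix.trace, Matrix.diag, Matrix.mul_apply, Matrix.transpose_apply]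
    rw [htr, hKdef]
    have h1 : ∑ i, ∑ j, (G + t • H) j i * (G + t • H) j i
        ≤ ∑ i : Fin n, ∑ j : Fin n, (|G j i| + |H j i|) ^ 2 :=
      Finset.sum_le_sum fun i _ => Finset.sum_le_sum fun j _ => hent i j
    have h2 : ∑ i : Fin n, ∑ j : Fin n, (|G j i| + |H j i|) ^ 2
        = ∑ i : Fin n, ∑ j : Fin n, (|G i j| + |H i j|) ^ 2 := Finset.sum_comm
    linarith
  -- choice of δ
  have hcontA : Continuous Amap := by
    have hM : Continuous fun t : ℝ => G + t • H :=
      continuous_const.add (continuous_id.smul continuous_const)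
    exact (hM.matrix_transpose).matrix_mul hM
  have hA0 : Amap 0 = Gᵀ * G := by
    rw [hAmap]; simp
  have hev : ∀ᶠ t in nhds (0:ℝ), d0 / 2 < det (Amap t) := by
    have h2 : d0 / 2 < det (Amap 0) := by rw [hA0, ← hd0def]; linarith
    exact (hcontA.matrix_det.tendsto 0).eventually (eventually_gt_nhds h2)
  obtain ⟨δ₀, hδ₀, hδball⟩ := Metric.eventually_nhds_iff.mp hev
  set δ : ℝ := min (δ₀ / 2) 1 with hδdef
  have hδpos : 0 < δ := lt_min (by linarith) one_pos
  have hδ1 : δ ≤ 1 := min_le_right _ _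
  set s : Set ℝ := Ioo (-δ) δ with hsdef
  have hs_open : IsOpen s := isOpen_Ioo
  have h0s : (0:ℝ) ∈ s := by
    constructor
    · simpa using hδpos
    · simpa using hδpos
  have hts : ∀ t ∈ s, |t| ≤ 1 ∧ d0 / 2 < det (Amap t) := by
    intro t ht
    obtain ⟨h1, h2⟩ := ht
    have habs : |t| < δ := abs_lt.mpr ⟨h1, h2⟩
    refine ⟨le_of_lt (lt_of_lt_of_le habs hδ1), ?_⟩
    apply hδball
    rw [Real.dist_eq, sub_zero]
    exact lt_of_lt_of_le habs (le_trans (min_le_left _ _) (by linarith))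
  -- eigenvalue bounds
  set a : ℝ := (d0 / 2) / K ^ (n - 1) with hadef
  have ha : 0 < a := div_pos (by linarith) (pow_pos hK0 _)
  have hlamB : ∀ t ∈ s, ∀ i, lam t i ∈ Icc a K := by
    intro t ht i
    obtain ⟨ht1, ht2⟩ := hts t ht
    have h1 : ∑ i, lam t i ≤ K := by rw [← htrace]; exact htraceK t ht1
    have h2 : d0 / 2 ≤ ∏ i, lam t i := by rw [← hdetA]; linarith
    exact eig_bounds (hPSD t) h1 h2 (by linarith) hK0 i
  -- singular value bounds
  have hGt : Gᵀ = V * diagonal σ * Uᵀ := by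
    rw [hSVD, transpose_mul, transpose_mul, transpose_transpose, diagonal_transpose,
      Matrix.mul_assoc]
  have hGtG : Gᵀ * G = V * diagonal (fun i => σ i ^ 2) * Vᵀ := by
    conv_lhs => rw [hGt, hSVD]
    calc V * diagonal σ * Uᵀ * (U * diagonal σ * Vᵀ)
        = V * diagonal σ * (Uᵀ * U) * (diagonal σ * Vᵀ) := by noncomm_ring
      _ = V * (diagonal σ * diagonal σ) * Vᵀ := by rw [hU]; noncomm_ring
      _ = V * diagonal (fun i => σ i ^ 2) * Vᵀ := by
          rw [diagonal_mul_diagonal]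
          have he : (fun i => σ i * σ i) = fun i => σ i ^ 2 := by
            funext i; rw [sq]
          rw [he]
  have htrsig : ∑ i, σ i ^ 2 ≤ K := by
    have h1 : trace (Amap 0) ≤ K := htraceK 0 (by simp)
    rwa [hA0, hGtG, trace_conj_diag _ hV] at h1
  have hdetsig : d0 / 2 ≤ ∏ i, σ i ^ 2 := by
    have h2 : det (Gᵀ * G) = ∏ i, σ i ^ 2 := by
      rw [hGtG, det_mul, det_mul, det_diagonal, det_transpose, mul_right_comm]
      have h1 : det V * det V = 1 := by
        have := congrArg det hV
        rwa [det_mul, det_transpose, det_one] at this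
      rw [h1, one_mul]
    rw [← hd0def] at h2
    linarith
  have hsigB : ∀ i, σ i ^ 2 ∈ Icc a K := fun i =>
    eig_bounds (fun j => sq_nonneg _) htrsig hdetsig (by linarith) hK0 i
  have haK : a ≤ K := le_trans (hsigB ⟨0, hn1⟩).1 (hsigB ⟨0, hn1⟩).2
  -- functions g and g'
  set g : ℝ → ℝ := fun x => x ^ (p / 2) with hgdef
  set g' : ℝ → ℝ := fun x => p / 2 * x ^ (p / 2 - 1) with hg'def
  have hg'cont : ContinuousOn g' (Icc a K) := by
    apply ContinuousOn.mul continuousOn_const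
    intro x hx
    exact (Real.continuousAt_rpow_const x _
      (Or.inl (ne_of_gt (lt_of_lt_of_le ha hx.1)))).continuousWithinAt
  -- approximating polynomials
  have hex : ∀ m : ℕ, ∃ q : ℝ[X], ∀ x ∈ Icc a K, |q.eval x - g' x| < 1 / (m + 1) :=
    fun m => exists_polynomial_near_of_continuousOn a K g' hg'cont _ (by positivity)
  choose r hr using hex
  set Q : ℕ → ℝ[X] := fun m => pInt (r m) + C (g a - (pInt (r m)).eval a) with hQdef
  have hQ' : ∀ m, derivative (Q m) = r m := by
    intro m
    rw [hQdef]
    simp [derivative_pInt]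
  have hQa : ∀ m, (Q m).eval a = g a := by
    intro m; simp [hQdef]
  have hgderiv : ∀ x ∈ Icc a K, HasDerivAt g (g' x) x := by
    intro x hx
    have hx0 : x ≠ 0 := ne_of_gt (lt_of_lt_of_le ha hx.1)
    exact Real.hasDerivAt_rpow_const (Or.inl hx0)
  have hQapprox : ∀ m, ∀ x ∈ Icc a K,
      |(Q m).eval x - g x| ≤ 1 / (m + 1) * (K - a) := by
    intro m x hx
    have hderiv : ∀ y ∈ Icc a K, HasDerivWithinAt (fun z => (Q m).eval z - g z)
        ((r m).eval y - g' y) (Icc a K) y := by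
      intro y hy
      have h1 : HasDerivAt (fun z => (Q m).eval z) ((Q m).derivative.eval y) y :=
        (Q m).hasDerivAt y
      rw [hQ' m] at h1
      exact (h1.sub (hgderiv y hy)).hasDerivWithinAt
    have hbound : ∀ y ∈ Icc a K, ‖(r m).eval y - g' y‖ ≤ 1 / (m + 1) := by
      intro y hy
      rw [Real.norm_eq_abs]
      exact le_of_lt (hr m y hy)
    have hmvt := (convex_Icc a K).norm_image_sub_le_of_norm_hasDerivWithin_le
      hderiv hbound (left_mem_Icc.mpr haK) hx
    rw [hQa m, sub_self, sub_zero, Real.norm_eq_abs, Real.norm_eq_abs] at hmvt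
    calc |(Q m).eval x - g x| ≤ 1 / (m + 1) * |x - a| := hmvt
      _ ≤ 1 / (m + 1) * (K - a) := by
          have h1 : |x - a| ≤ K - a := by
            rw [abs_le]
            constructor
            · linarith [hx.1, hx.2]
            · linarith [hx.2]
          have h2 : (0:ℝ) ≤ 1 / ((m:ℝ) + 1) := by positivity
          nlinarith
  -- the approximating functions and their derivatives
  set F : ℕ → ℝ → ℝ := fun m t => trace (aeval (Amap t) (Q m)) with hF
  set F' : ℕ → ℝ → ℝ := fun m t => trace (aeval (Amap t) (r m) * Bmap t) with hF'
  have hderivA : ∀ t, HasDerivAt Amap (Bmap t) t := by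
    intro t
    have heq : Amap = fun t : ℝ => Gᵀ * G + t • C1 + (t ^ 2) • C2 := funext hAexp
    rw [heq, hBmap]
    have h1 : HasDerivAt (fun t : ℝ => t • C1) ((1:ℝ) • C1) t :=
      (hasDerivAt_id t).smul_const C1
    have h2 : HasDerivAt (fun t : ℝ => t ^ 2 • C2) (((2:ℕ) * t ^ 1 : ℝ) • C2) t :=
      (hasDerivAt_pow 2 t).smul_const C2
    have h3 := ((hasDerivAt_const t (Gᵀ * G)).add h1).add h2
    have h4 : (0 : Matrix (Fin n) (Fin n) ℝ) + (1:ℝ) • C1 + (((2:ℕ) * t ^ 1 : ℝ)) • C2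
        = C1 + (2 * t) • C2 := by
      simp
    rwa [h4] at h3
  have hFderiv : ∀ m t, HasDerivAt (F m) (F' m t) t := by
    intro m t
    have h1 := hasDerivAt_trace_aeval (hderivA t) (Q m)
    rw [hQ' m] at h1
    exact h1
  have hFval : ∀ m t, F m t = ∑ i, (Q m).eval (lam t i) := by
    intro m t
    rw [hF]
    simp only
    conv_lhs => rw [hW2 t]
    rw [aeval_conj_orth _ (hW1 t), trace_conj_diag _ (hW1 t)]
  have hF'val : ∀ m t, F' m t = ∑ i, (r m).eval (lam t i) * ((W t)ᵀ * Bmap t * W t) i i := by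
    intro m t
    rw [hF']
    simp only
    conv_lhs => rw [hW2 t]
    rw [aeval_conj_orth _ (hW1 t), trace_conj_diag_mul]
  -- bounds on the weights
  have hWent : ∀ t : ℝ, ∀ i j : Fin n, |W t j i| ≤ 1 := by
    intro t i j
    have h1 : ((W t)ᵀ * W t) i i = 1 := by rw [hW1 t]; simp [Matrix.one_apply]
    have h2 : ∑ k, W t k i * W t k i = 1 := by
      rw [← h1]; simp [Matrix.mul_apply, Matrix.transpose_apply]
    have h3 : W t j i * W t j i ≤ 1 := by
      rw [← h2]
      exact Finset.single_le_sum (f := fun k => W t k i * W t k i)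
        (fun k _ => mul_self_nonneg _) (Finset.mem_univ j)
    nlinarith [abs_nonneg (W t j i), abs_mul_abs_self (W t j i)]
  set CB : ℝ := ∑ j, ∑ k, (|C1 j k| + 2 * |C2 j k|) with hCBdef
  have hCB0 : 0 ≤ CB := by
    rw [hCBdef]; positivity
  have hwbound : ∀ t : ℝ, |t| ≤ 1 → ∀ i, |((W t)ᵀ * Bmap t * W t) i i| ≤ CB := by
    intro t ht i
    have hBent : ∀ j k, |Bmap t j k| ≤ |C1 j k| + 2 * |C2 j k| := by
      intro j k
      rw [hBmap]
      simp only [Matrix.add_apply, Matrix.smul_apply, smul_eq_mul]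
      calc |C1 j k + 2 * t * C2 j k| ≤ |C1 j k| + |2 * t * C2 j k| := abs_add_le _ _
        _ ≤ |C1 j k| + 2 * |C2 j k| := by
            rw [abs_mul, abs_mul, abs_two]
            have := abs_nonneg (C2 j k)
            nlinarith
    have hentry : ((W t)ᵀ * Bmap t * W t) i i
        = ∑ k, (∑ j, W t j i * Bmap t j k) * W t k i := by
      simp [Matrix.mul_apply, Matrix.transpose_apply]
    rw [hentry]
    calc |∑ k, (∑ j, W t j i * Bmap t j k) * W t k i|
        ≤ ∑ k, |(∑ j, W t j i * Bmap t j k) * W t k i| := Finset.abs_sum_le_sum_abs _ _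
      _ ≤ ∑ k, ∑ j, (|C1 j k| + 2 * |C2 j k|) := by
          apply Finset.sum_le_sum
          intro k _
          rw [abs_mul]
          calc |∑ j, W t j i * Bmap t j k| * |W t k i|
              ≤ |∑ j, W t j i * Bmap t j k| * 1 := by
                have := abs_nonneg (∑ j, W t j i * Bmap t j k)
                nlinarith [hWent t i k]
            _ = |∑ j, W t j i * Bmap t j k| := mul_one _
            _ ≤ ∑ j, |W t j i * Bmap t j k| := Finset.abs_sum_le_sum_abs _ _
            _ ≤ ∑ j, (|C1 j k| + 2 * |C2 j k|) := by
                apply Finset.sum_le_sum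
                intro j _
                rw [abs_mul]
                have h1 := hWent t i j
                have h2 := hBent j k
                have h3 := abs_nonneg (Bmap t j k)
                have h4 := abs_nonneg (W t j i)
                nlinarith
      _ = CB := by rw [hCBdef]; exact Finset.sum_comm
  -- the limit derivative function
  set hfun : ℝ → ℝ := fun t => ∑ i, g' (lam t i) * ((W t)ᵀ * Bmap t * W t) i i with hhdef
  have hdistbound : ∀ m : ℕ, ∀ t ∈ s, dist (hfun t) (F' m t) ≤ 1 / (m + 1) * (n * CB) := by
    intro m t ht
    rw [hF'val m t, hhdef]
    simp only
    rw [Real.dist_eq, ← Finset.sum_sub_distrib]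
    calc |∑ i, (g' (lam t i) * ((W t)ᵀ * Bmap t * W t) i i
            - (r m).eval (lam t i) * ((W t)ᵀ * Bmap t * W t) i i)|
        ≤ ∑ i, |g' (lam t i) * ((W t)ᵀ * Bmap t * W t) i i
            - (r m).eval (lam t i) * ((W t)ᵀ * Bmap t * W t) i i| :=
          Finset.abs_sum_le_sum_abs _ _
      _ ≤ ∑ _i : Fin n, 1 / (m + 1) * CB := by
          apply Finset.sum_le_sum
          intro i _
          rw [← sub_mul, abs_mul]
          have h1 : |g' (lam t i) - (r m).eval (lam t i)| ≤ 1 / (m + 1) := by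
            rw [abs_sub_comm]
            exact le_of_lt (hr m _ (hlamB t ht i))
          have h2 := hwbound t (hts t ht).1 i
          have h3 := abs_nonneg (((W t)ᵀ * Bmap t * W t) i i)
          have h4 := abs_nonneg (g' (lam t i) - (r m).eval (lam t i))
          nlinarith
      _ = 1 / (m + 1) * (n * CB) := by
          rw [Finset.sum_const, Finset.card_univ, Fintype.card_fin, nsmul_eq_mul]
          ring
  have hunif : TendstoUniformlyOn F' hfun atTop s := by
    rw [Metric.tendstoUniformlyOn_iff]
    intro ε hε
    have htend : Tendsto (fun m : ℕ => 1 / ((m:ℝ) + 1) * (n * CB + 1)) atTop (𝓝 0) := by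
      have h1 := tendsto_one_div_add_atTop_nhds_zero_nat (𝕜 := ℝ)
      have h2 := h1.mul_const ((n:ℝ) * CB + 1)
      simpa using h2
    filter_upwards [htend.eventually_lt_const hε] with m hm t ht
    have h1 := hdistbound m t ht
    have h2 : (0:ℝ) < 1 / ((m:ℝ) + 1) := by positivity
    have h3 : 1 / ((m:ℝ) + 1) * (n * CB) < 1 / ((m:ℝ) + 1) * (n * CB + 1) := by
      nlinarith
    calc dist (hfun t) (F' m t) ≤ 1 / (m + 1) * (n * CB) := h1
      _ < ε := lt_trans h3 hm
  have hptwise : ∀ t ∈ s,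
      Tendsto (fun m => F m t) atTop (𝓝 (schattenPowSq p (G + t • H))) := by
    intro t ht
    rw [f_eq t]
    have hbd : ∀ m : ℕ, dist (F m t) (∑ i, lam t i ^ (p / 2))
        ≤ (n : ℝ) * (1 / (m + 1) * (K - a)) := by
      intro m
      rw [hFval m t, Real.dist_eq, ← Finset.sum_sub_distrib]
      calc |∑ i, ((Q m).eval (lam t i) - lam t i ^ (p / 2))|
          ≤ ∑ i, |(Q m).eval (lam t i) - lam t i ^ (p / 2)| := Finset.abs_sum_le_sum_abs _ _
        _ ≤ ∑ _i : Fin n, 1 / (m + 1) * (K - a) := by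
            apply Finset.sum_le_sum
            intro i _
            exact hQapprox m _ (hlamB t ht i)
        _ = (n : ℝ) * (1 / (m + 1) * (K - a)) := by
            rw [Finset.sum_const, Finset.card_univ, Fintype.card_fin, nsmul_eq_mul]
    rw [tendsto_iff_dist_tendsto_zero]
    have hzero : Tendsto (fun m : ℕ => (n : ℝ) * (1 / ((m:ℝ) + 1) * (K - a))) atTop (𝓝 0) := by
      have h1 := tendsto_one_div_add_atTop_nhds_zero_nat (𝕜 := ℝ)
      have h2 := (h1.mul_const (K - a)).const_mul (n : ℝ)
      simpa using h2
    exact tendsto_of_tendsto_of_tendsto_of_le_of_le tendsto_const_nhds hzero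
      (fun m => dist_nonneg) hbd
  have hmain : HasDerivAt (fun t : ℝ => schattenPowSq p (G + t • H)) (hfun 0) 0 :=
    hasDerivAt_of_tendstoUniformlyOn hs_open hunif
      (Filter.Eventually.of_forall fun m x _ => hFderiv m x) hptwise h0s
  -- identify hfun 0
  have hAmap0 : Amap 0 = V * diagonal (fun i => σ i ^ 2) * Vᵀ := by rw [hA0, hGtG]
  have hF'0 : ∀ m, F' m 0 = ∑ i, (r m).eval (σ i ^ 2) * (Vᵀ * Bmap 0 * V) i i := by
    intro m
    rw [hF']
    simp only
    conv_lhs => rw [hAmap0]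
    rw [aeval_conj_orth _ hV, trace_conj_diag_mul]
  have hlim1 : Tendsto (fun m => F' m 0) atTop (𝓝 (hfun 0)) := hunif.tendsto_at h0s
  have hlim2 : Tendsto (fun m => F' m 0) atTop
      (𝓝 (∑ i, g' (σ i ^ 2) * (Vᵀ * Bmap 0 * V) i i)) := by
    have heq : (fun m => F' m 0)
        = fun m => ∑ i, (r m).eval (σ i ^ 2) * (Vᵀ * Bmap 0 * V) i i := funext hF'0
    rw [heq]
    apply tendsto_finset_sum
    intro i _
    apply Tendsto.mul_const
    rw [tendsto_iff_dist_tendsto_zero]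
    have hbd : ∀ m : ℕ, dist ((r m).eval (σ i ^ 2)) (g' (σ i ^ 2)) ≤ 1 / ((m:ℝ) + 1) := by
      intro m
      rw [Real.dist_eq]
      exact le_of_lt (hr m _ (hsigB i))
    exact tendsto_of_tendsto_of_tendsto_of_le_of_le tendsto_const_nhds
      (by simpa using tendsto_one_div_add_atTop_nhds_zero_nat (𝕜 := ℝ))
      (fun m => dist_nonneg) hbd
  have hh0 : hfun 0 = ∑ i, g' (σ i ^ 2) * (Vᵀ * Bmap 0 * V) i i :=
    tendsto_nhds_unique hlim1 hlim2
  -- final algebraic identification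
  have hB0 : Bmap 0 = Gᵀ * H + Hᵀ * G := by
    rw [hBmap, hC1]; simp
  have hgp : (fun i => g' (σ i ^ 2)) = fun i => p / 2 * σ i ^ (p - 2) := by
    funext i
    rw [hg'def]
    simp only
    congr 1
    rw [← Real.rpow_natCast (σ i) 2, ← Real.rpow_mul (le_of_lt (hσ i))]
    congr 1
    push_cast
    ring
  have hσp : ∀ i, σ i ^ (p - 2) * σ i = σ i ^ (p - 1) := by
    intro i
    have h1 : σ i ^ (p - 2) * σ i = σ i ^ (p - 2) * σ i ^ (1:ℝ) := by
      rw [Real.rpow_one]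
    rw [h1, ← Real.rpow_add (hσ i)]
    congr 1
    ring
  have hD2S : diagonal (fun i => σ i ^ (p - 2)) * diagonal σ
      = diagonal (fun i => σ i ^ (p - 1)) := by
    have hfe : (fun i => σ i ^ (p - 2) * σ i) = fun i => σ i ^ (p - 1) := funext hσp
    rw [diagonal_mul_diagonal, hfe]
  have hSD2 : diagonal σ * diagonal (fun i => σ i ^ (p - 2))
      = diagonal (fun i => σ i ^ (p - 1)) := by
    have hfe : (fun i => σ i * σ i ^ (p - 2)) = fun i => σ i ^ (p - 1) := by
      funext i; rw [mul_comm]; exact hσp i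
    rw [diagonal_mul_diagonal, hfe]
  have htd : ∀ (d : Fin n → ℝ) (M : Matrix (Fin n) (Fin n) ℝ),
      trace (diagonal d * Mᵀ) = trace (diagonal d * M) := by
    intro d M
    rw [trace_diagonal_mul, trace_diagonal_mul]
    exact Finset.sum_congr rfl fun i _ => by rw [Matrix.transpose_apply]
  have hT1 : V * diagonal (fun i => σ i ^ (p - 2)) * Vᵀ * (Gᵀ * H)
      = V * diagonal (fun i => σ i ^ (p - 1)) * Uᵀ * H := by
    rw [hGt]
    calc V * diagonal (fun i => σ i ^ (p - 2)) * Vᵀ * (V * diagonal σ * Uᵀ * H)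
        = V * diagonal (fun i => σ i ^ (p - 2)) * (Vᵀ * V) * (diagonal σ * (Uᵀ * H)) := by
          noncomm_ring
      _ = V * (diagonal (fun i => σ i ^ (p - 2)) * diagonal σ) * (Uᵀ * H) := by
          rw [hV]; noncomm_ring
      _ = V * diagonal (fun i => σ i ^ (p - 1)) * Uᵀ * H := by
          rw [hD2S]; noncomm_ring
  have hT2 : trace (V * diagonal (fun i => σ i ^ (p - 2)) * Vᵀ * (Hᵀ * G))
      = trace (V * diagonal (fun i => σ i ^ (p - 1)) * Uᵀ * H) := by
    have e0 : Hᵀ * G = Hᵀ * U * diagonal σ * Vᵀ := by rw [hSVD]; noncomm_ring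
    rw [e0]
    have e1 : V * diagonal (fun i => σ i ^ (p - 2)) * Vᵀ * (Hᵀ * U * diagonal σ * Vᵀ)
        = V * (diagonal (fun i => σ i ^ (p - 2)) * (Vᵀ * (Hᵀ * U)) * diagonal σ * Vᵀ) := by
      noncomm_ring
    rw [e1, Matrix.trace_mul_comm]
    have e2 : diagonal (fun i => σ i ^ (p - 2)) * (Vᵀ * (Hᵀ * U)) * diagonal σ * Vᵀ * V
        = diagonal (fun i => σ i ^ (p - 2)) * (Vᵀ * (Hᵀ * U)) * diagonal σ := by
      rw [Matrix.mul_assoc (diagonal (fun i => σ i ^ (p - 2)) * (Vᵀ * (Hᵀ * U)) * diagonal σ),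
        hV, Matrix.mul_one]
    rw [e2, Matrix.trace_mul_comm]
    have e3 : diagonal σ * (diagonal (fun i => σ i ^ (p - 2)) * (Vᵀ * (Hᵀ * U)))
        = diagonal (fun i => σ i ^ (p - 1)) * (Vᵀ * (Hᵀ * U)) := by
      rw [← Matrix.mul_assoc, hSD2]
    rw [e3]
    have e6 : Vᵀ * (Hᵀ * U) = (Uᵀ * H * V)ᵀ := by
      rw [transpose_mul, transpose_mul, transpose_transpose]
    calc trace (diagonal (fun i => σ i ^ (p - 1)) * (Vᵀ * (Hᵀ * U)))
        = trace (diagonal (fun i => σ i ^ (p - 1)) * (Uᵀ * H * V)ᵀ) := by rw [e6]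
      _ = trace (diagonal (fun i => σ i ^ (p - 1)) * (Uᵀ * H * V)) := htd _ _
      _ = trace (V * diagonal (fun i => σ i ^ (p - 1)) * Uᵀ * H) := by
          rw [show diagonal (fun i => σ i ^ (p - 1)) * (Uᵀ * H * V)
              = diagonal (fun i => σ i ^ (p - 1)) * (Uᵀ * H) * V from by noncomm_ring,
            Matrix.trace_mul_comm]
          congr 1
          noncomm_ring
  have hfinal : hfun 0 = p * trace (V * diagonal (fun i => σ i ^ (p - 1)) * Uᵀ * H) := by
    rw [hh0]
    have h1 : ∑ i, g' (σ i ^ 2) * (Vᵀ * Bmap 0 * V) i i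
        = trace (V * diagonal (fun i => g' (σ i ^ 2)) * Vᵀ * Bmap 0) :=
      (trace_conj_diag_mul V _ _).symm
    rw [h1, hgp]
    have h2 : diagonal (fun i => p / 2 * σ i ^ (p - 2))
        = (p / 2) • diagonal (fun i => σ i ^ (p - 2)) := by
      have hfe : (fun i => p / 2 * σ i ^ (p - 2)) = (p / 2) • fun i => σ i ^ (p - 2) := by
        funext i; simp
      rw [hfe, diagonal_smul]
    rw [h2]
    have h3 : V * ((p / 2) • diagonal (fun i => σ i ^ (p - 2))) * Vᵀ * Bmap 0
        = (p / 2) • (V * diagonal (fun i => σ i ^ (p - 2)) * Vᵀ * Bmap 0) := by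
      rw [Matrix.mul_smul, Matrix.smul_mul, Matrix.smul_mul]
    rw [h3, trace_smul, smul_eq_mul, hB0, Matrix.mul_add, trace_add, hT1, hT2]
    ring
  rw [← hfinal]
  exact hmain
end
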